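/- Fix an integer s ≥ 2, an integer k ≥ 0, and positive reals a and y_k. Define y_i = a·(i+1)·y_{i-1}^s for each integer i > k. If y_k < (a(k+3))^{-1/(s-1)}, then there exist constants C < 1 and b > 0 such that y_{k+j} < b·C^{s^j} for all integers j ≥ 0. -/
import Mathlib


/-- Fix integers `s ≥ 2`, `k ≥ 0` and positive reals `a`, `y_k`, and define
`y_i = a (i+1) y_{i-1}^s` for `i > k`. If `y_k < (a(k+3))^{-1/(s-1)}`, then there
are constants `C < 1` and `b > 0` with `y_{k+j} < b C^(s^j)` for all `j ≥ 0`. -/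
theorem stmt_10 (s k : ℕ) (hs : 2 ≤ s) (a : ℝ) (ha : 0 < a) (y : ℕ → ℝ)
    (hyk : 0 < y k)
    (hrec : ∀ i, k < i → y i = a * ((i : ℝ) + 1) * y (i - 1) ^ s)
    (hsmall : y k < (a * ((k : ℝ) + 3)) ^ (-(1 / ((s : ℝ) - 1)))) :
    ∃ C b : ℝ, C < 1 ∧ 0 < b ∧ ∀ j : ℕ, y (k + j) < b * C ^ s ^ j := by
  have hs2 : (2:ℝ) ≤ (s:ℝ) := by exact_mod_cast hs
  set p : ℝ := 1 / ((s:ℝ) - 1) with hpdef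
  have hsne : (s:ℝ) - 1 ≠ 0 := by linarith
  have hp : 0 < p := by rw [hpdef]; apply div_pos one_pos; linarith
  have hp1 : p ≤ 1 := by rw [hpdef, div_le_one (by linarith)]; linarith
  have hps : p * (s:ℝ) = p + 1 := by
    have h1 : p * ((s:ℝ) - 1) = 1 := by rw [hpdef]; field_simp
    linear_combination h1
  set b : ℝ := (a * ((k:ℝ) + 3)) ^ (-p) with hbdef
  have hb : 0 < b := Real.rpow_pos_of_pos (by positivity) _
  set C : ℝ := y k / b with hCdef
  have hC0 : 0 < C := div_pos hyk hb
  have hC1 : C < 1 := (div_lt_one hb).2 hsmall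
  -- key inequality
  have hkey : ∀ n : ℝ, 3 ≤ n →
      a * (n - 1) * ((a * n) ^ (-p)) ^ s ≤ (a * (n + 1)) ^ (-p) := by
    intro n hn
    have hn0 : (0:ℝ) < n := by linarith
    have hn1 : (0:ℝ) < n + 1 := by linarith
    have han : (0:ℝ) < a * n := by positivity
    have h1 : ((a * n) ^ (-p)) ^ s = (a * n) ^ (-(p + 1)) := by
      rw [← Real.rpow_natCast ((a * n) ^ (-p)) s, ← Real.rpow_mul han.le]
      congr 1
      rw [neg_mul, hps]
    rw [h1, Real.mul_rpow ha.le hn0.le, Real.mul_rpow ha.le hn1.le]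
    have ha2 : a * (n - 1) * (a ^ (-(p + 1)) * n ^ (-(p + 1)))
        = a ^ (-p) * ((n - 1) * n ^ (-(p + 1))) := by
      rw [show a ^ (-p) = a * a ^ (-(p+1)) by
        nth_rewrite 2 [← Real.rpow_one a]
        rw [← Real.rpow_add ha]
        norm_num]
      ring
    rw [ha2]
    have hA : (0:ℝ) < n ^ (p + 1) := Real.rpow_pos_of_pos hn0 _
    have hB : (0:ℝ) < (n + 1) ^ p := Real.rpow_pos_of_pos hn1 _
    have e1 : (n + 1) ^ p ≤ (n + 1) / n * n ^ p := by
      have h2 : ((n + 1) / n) ^ p ≤ (n + 1) / n := by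
        have h3 := Real.rpow_le_rpow_of_exponent_le
          (x := (n + 1) / n) (by rw [le_div_iff₀ hn0]; linarith) hp1
        rwa [Real.rpow_one] at h3
      calc (n + 1) ^ p = (n * ((n + 1) / n)) ^ p := by
            congr 1; field_simp
        _ = n ^ p * ((n + 1) / n) ^ p := Real.mul_rpow hn0.le (by positivity)
        _ ≤ n ^ p * ((n + 1) / n) :=
            mul_le_mul_of_nonneg_left h2 (Real.rpow_pos_of_pos hn0 p).le
        _ = (n + 1) / n * n ^ p := by ring
    have e2 : (n - 1) * (n + 1) ^ p ≤ n ^ (p + 1) := by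
      have e3 : n ^ (p + 1) = n ^ p * n := by
        rw [Real.rpow_add hn0, Real.rpow_one]
      have e4 : (n - 1) * ((n + 1) / n) ≤ n := by
        rw [mul_div_assoc', div_le_iff₀ hn0]; nlinarith
      calc (n - 1) * (n + 1) ^ p ≤ (n - 1) * ((n + 1) / n * n ^ p) :=
            mul_le_mul_of_nonneg_left e1 (by linarith)
        _ = ((n - 1) * ((n + 1) / n)) * n ^ p := by ring
        _ ≤ n * n ^ p := mul_le_mul_of_nonneg_right e4 (Real.rpow_pos_of_pos hn0 p).le
        _ = n ^ (p + 1) := by rw [e3]; ring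
    have hmain : (n - 1) * n ^ (-(p + 1)) ≤ (n + 1) ^ (-p) := by
      rw [Real.rpow_neg hn0.le, Real.rpow_neg hn1.le, ← div_eq_mul_inv,
        div_le_iff₀ hA, inv_mul_eq_div, le_div_iff₀ hB]
      exact e2
    exact mul_le_mul_of_nonneg_left hmain (Real.rpow_pos_of_pos ha _).le
  -- positivity of the sequence
  have hpos : ∀ j : ℕ, 0 < y (k + j) := by
    intro j
    induction j with
    | zero => simpa using hyk
    | succ j ih =>
      have h1 : y (k + (j + 1)) = a * ((k:ℝ) + j + 2) * y (k + j) ^ s := by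
        have h2 := hrec (k + j + 1) (by omega)
        have h3 : k + j + 1 - 1 = k + j := by omega
        rw [h3] at h2
        rw [show k + (j + 1) = k + j + 1 from rfl, h2]
        push_cast
        ring
      rw [h1]
      have : (0:ℝ) < (k:ℝ) + j + 2 := by positivity
      positivity
  -- main induction
  have main : ∀ j : ℕ,
      y (k + j) ≤ (a * ((k:ℝ) + j + 3)) ^ (-p) * C ^ s ^ j := by
    intro j
    induction j with
    | zero =>
      simp only [Nat.add_zero, pow_zero, pow_one, Nat.cast_zero, add_zero]
      rw [hCdef, ← hbdef, mul_div_cancel₀ _ hb.ne']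
    | succ j ih =>
      simp only [Nat.cast_add, Nat.cast_one]
      have h1 : y (k + (j + 1)) = a * ((k:ℝ) + j + 2) * y (k + j) ^ s := by
        have h2 := hrec (k + j + 1) (by omega)
        have h3 : k + j + 1 - 1 = k + j := by omega
        rw [h3] at h2
        rw [show k + (j + 1) = k + j + 1 from rfl, h2]
        push_cast
        ring
      have hMj : (0:ℝ) < (a * ((k:ℝ) + j + 3)) ^ (-p) :=
        Real.rpow_pos_of_pos (by positivity) _
      have hcastk : (0:ℝ) ≤ (k:ℝ) := Nat.cast_nonneg k
      have hcastj : (0:ℝ) ≤ (j:ℝ) := Nat.cast_nonneg j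
      have hk := hkey ((k:ℝ) + j + 3) (by linarith)
      calc y (k + (j + 1)) = a * ((k:ℝ) + j + 2) * y (k + j) ^ s := h1
        _ ≤ a * ((k:ℝ) + j + 2) *
            ((a * ((k:ℝ) + j + 3)) ^ (-p) * C ^ s ^ j) ^ s := by
            apply mul_le_mul_of_nonneg_left _ (by positivity)
            exact pow_le_pow_left₀ (hpos j).le ih s
        _ = a * (((k:ℝ) + j + 3) - 1) * ((a * ((k:ℝ) + j + 3)) ^ (-p)) ^ s
            * (C ^ s ^ j) ^ s := by ring
        _ ≤ (a * (((k:ℝ) + j + 3) + 1)) ^ (-p) * (C ^ s ^ j) ^ s := by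
            apply mul_le_mul_of_nonneg_right hk (by positivity)
        _ = (a * ((k:ℝ) + ((j:ℝ) + 1) + 3)) ^ (-p) * C ^ s ^ (j + 1) := by
            rw [show ((k:ℝ) + ↑j + 3 + 1) = ((k:ℝ) + (↑j + 1) + 3) by ring,
              ← pow_mul, ← pow_succ]
  refine ⟨C, 2 * b, hC1, by linarith, fun j => ?_⟩
  have hmono : (a * ((k:ℝ) + j + 3)) ^ (-p) ≤ b := by
    rw [hbdef, Real.rpow_neg (by positivity), Real.rpow_neg (by positivity)]
    apply inv_anti₀ (Real.rpow_pos_of_pos (by positivity) p)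
    apply Real.rpow_le_rpow (by positivity) _ hp.le
    have : (0:ℝ) ≤ (j:ℝ) := Nat.cast_nonneg j
    nlinarith
  calc y (k + j) ≤ (a * ((k:ℝ) + j + 3)) ^ (-p) * C ^ s ^ j := main j
    _ ≤ b * C ^ s ^ j := mul_le_mul_of_nonneg_right hmono (by positivity)
    _ < 2 * b * C ^ s ^ j := by
        have : (0:ℝ) < C ^ s ^ j := pow_pos hC0 _
        nlinarith
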